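/- Let n ≥ 2, let α ∈ ℂ be a primitive n-th root of unity, let k ≥ 1, λ ∈ ℂ nonzero, and let q ∈ ℂ(z) be a nonzero rational function satisfying q(α z)·α^k = λ·q(z) (i.e. the k-differential q(z) dz^k is parallel under f(z) = α z with eigenvalue λ). Then λ = α^j for some integer 0 ≤ j < n, and there exists a rational function g ∈ ℂ(t) such that q(z) = g(z^n)·z^{j−k}. -/

import Mathlib

open Polynomial OnePoint

noncomputable section

/-- The Riemann sphere `P¹ = ℂ ∪ {∞}`. -/
abbrev P1 := OnePoint ℂ

namespace ParallelTensor

/-- Order of vanishing (negative at poles) of a nonzero rational function at a finite point. -/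
def ordC (g : RatFunc ℂ) (x : ℂ) : ℤ :=
  (g.num.rootMultiplicity x : ℤ) - (g.denom.rootMultiplicity x : ℤ)

/-- Composition `g ∘ f` of rational functions. -/
def comp (g f : RatFunc ℂ) : RatFunc ℂ :=
  Polynomial.aeval f g.num / Polynomial.aeval f g.denom

/-- Derivative of a rational function. -/
def deriv (f : RatFunc ℂ) : RatFunc ℂ :=
  algebraMap (Polynomial ℂ) (RatFunc ℂ)
      (Polynomial.derivative f.num * f.denom - f.num * Polynomial.derivative f.denom) /
    algebraMap (Polynomial ℂ) (RatFunc ℂ) (f.denom ^ 2)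

/-- The (global) degree of a rational map. -/
def degRat (f : RatFunc ℂ) : ℕ := max f.num.natDegree f.denom.natDegree

/-- Evaluation of a rational map as a self-map of the Riemann sphere. -/
def evalP1 (f : RatFunc ℂ) : P1 → P1 := fun x =>
  Option.elim x
    (if 0 < f.intDegree then (∞ : P1)
     else if f.intDegree < 0 then ((0 : ℂ) : P1)
     else ((f.num.leadingCoeff / f.denom.leadingCoeff : ℂ) : P1))
    (fun z => if f.denom.eval z = 0 then (∞ : P1)
              else ((f.num.eval z / f.denom.eval z : ℂ) : P1))

/-- Local degree of `f` at a finite point: the pole order at a pole, and the order of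
vanishing of `f - f(z)` otherwise. -/
def locDegC (f : RatFunc ℂ) (z : ℂ) : ℕ :=
  if f.denom.eval z = 0 then f.denom.rootMultiplicity z
  else (ordC (f - RatFunc.C (f.num.eval z / f.denom.eval z)) z).toNat

/-- Local degree (valency) of `f` at a point of the sphere; at `∞` it is computed in the
coordinate `w = 1/z`. -/
def locDeg (f : RatFunc ℂ) : P1 → ℕ := fun x =>
  Option.elim x (locDegC (comp f (RatFunc.X)⁻¹) 0) (locDegC f)

/-- Order of the meromorphic `k`-differential `q = g·dz^k` at a point of the sphere:
`ord_x(g)` at a finite point `x`, and at `∞` the order at `0` of `g(1/w)·(-w⁻²)^k`. -/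
def ordDiff (k : ℕ) (g : RatFunc ℂ) : P1 → ℤ := fun x =>
  Option.elim x (-g.intDegree - 2 * k) (ordC g)

/-- Pullback of the `k`-differential `q = g·dz^k` under `f`, namely `g(f(z))·f'(z)^k·dz^k`. -/
def pullback (k : ℕ) (f g : RatFunc ℂ) : RatFunc ℂ := comp g f * deriv f ^ k

/-- Ramification locus of `f`: the points of local degree at least 2. -/
def Ram (f : RatFunc ℂ) : Set P1 := {x | 2 ≤ locDeg f x}

/-- The postcritical set `⋃_{n ≥ 1} fⁿ(Ram_f)`. -/
def PostCrit (f : RatFunc ℂ) : Set P1 :=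
  ⋃ (n : ℕ) (_ : 1 ≤ n), (evalP1 f)^[n] '' Ram f

end ParallelTensor

lemma coeff_comp_C_mul_X' (p : Polynomial ℂ) (α : ℂ) (m : ℕ) :
    (p.comp (C α * X)).coeff m = α ^ m * p.coeff m := by
  induction p using Polynomial.induction_on' with
  | add p q hp hq => simp [add_comp, hp, hq, mul_add]
  | monomial i a =>
    rw [monomial_comp, mul_pow, ← C_pow, mul_left_comm]
    simp only [coeff_C_mul, coeff_monomial, coeff_X_pow]
    split_ifs with h h' h'
    · subst h'; ring
    · simp_all
    · simp_all
    · ring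

lemma eigen_decomp' {n : ℕ} (hn : 0 < n) {α : ℂ} (hα : IsPrimitiveRoot α n)
    {P : Polynomial ℂ} (hP : P ≠ 0) {c : ℂ}
    (h : P.comp (C α * X) = C c * P) :
    ∃ r : ℕ, r < n ∧ c = α ^ r ∧ ∃ p : Polynomial ℂ, p ≠ 0 ∧ P = expand ℂ n p * X ^ r := by
  have hα0 : α ≠ 0 := hα.ne_zero hn.ne'
  have hc : ∀ m, α ^ m * P.coeff m = c * P.coeff m := by
    intro m; rw [← coeff_comp_C_mul_X', h, coeff_C_mul]
  obtain ⟨m₀, hm₀mem⟩ := Polynomial.support_nonempty.mpr hP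
  have hm₀ : P.coeff m₀ ≠ 0 := mem_support_iff.mp hm₀mem
  have hmod : ∀ m : ℕ, α ^ m = α ^ (m % n) := by
    intro m
    conv_lhs => rw [← Nat.div_add_mod m n]
    rw [pow_add, pow_mul, hα.pow_eq_one, one_pow, one_mul]
  have hcval : c = α ^ m₀ := (mul_right_cancel₀ hm₀ (hc m₀)).symm
  set r := m₀ % n with hrdef
  have hrn : r < n := Nat.mod_lt _ hn
  have hsup : ∀ m ∈ P.support, m % n = r := by
    intro m hm
    have hm' : P.coeff m ≠ 0 := mem_support_iff.mp hm
    have h1 : α ^ m = α ^ m₀ := by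
      have := hc m
      rw [← hcval] at *
      exact mul_right_cancel₀ hm' this
    have h2 : α ^ (m % n) = α ^ r := by
      rw [← hmod m, hrdef, ← hmod m₀]; exact h1
    exact hα.pow_inj (Nat.mod_lt _ hn) hrn h2
  refine ⟨r, hrn, hcval.trans (hmod m₀), ?_⟩
  set p : Polynomial ℂ := ∑ i ∈ P.support, monomial ((i - r) / n) (P.coeff i) with hpdef
  have hPid : P = expand ℂ n p * X ^ r := by
    rw [hpdef, map_sum, Finset.sum_mul]
    conv_lhs => rw [P.as_sum_support]
    refine Finset.sum_congr rfl fun i hi => ?_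
    have h1 : i % n = r := hsup i hi
    have hri : r ≤ i := h1 ▸ Nat.mod_le i n
    have hdvd : n ∣ i - r :=
      ⟨i / n, Nat.sub_eq_of_eq_add (by rw [← h1]; exact (Nat.div_add_mod i n).symm)⟩
    rw [expand_monomial, X_pow_eq_monomial, monomial_mul_monomial, mul_one,
      Nat.div_mul_cancel hdvd, Nat.sub_add_cancel hri]
  refine ⟨p, fun hp0 => hP (by rw [hPid, hp0, map_zero, zero_mul]), hPid⟩

/-- Parallel `k`-differentials of the rotation `z ↦ αz`, `α` a primitive `n`-th root of unity:
`λ = α^j` for some `0 ≤ j < n` and `q(z) = g(zⁿ)·z^(j-k)`. -/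
theorem stmt_13 (n : ℕ) (hn : 2 ≤ n) (α : ℂ) (hα : IsPrimitiveRoot α n)
    (k : ℕ) (hk : 1 ≤ k) (lam : ℂ) (hlam : lam ≠ 0) (q : RatFunc ℂ) (hq : q ≠ 0)
    (heq : ParallelTensor.comp q (RatFunc.C α * RatFunc.X) * RatFunc.C (α ^ k)
            = RatFunc.C lam * q) :
    ∃ j : ℕ, j < n ∧ lam = α ^ j ∧
      ∃ g : RatFunc ℂ,
        q = ParallelTensor.comp g (RatFunc.X ^ n) * RatFunc.X ^ ((j : ℤ) - (k : ℤ)) := by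
  have hn0 : 0 < n := by omega
  have hα0 : α ≠ 0 := hα.ne_zero hn0.ne'
  have hN0 : q.num ≠ 0 := RatFunc.num_ne_zero hq
  have hD0 : q.denom ≠ 0 := q.denom_ne_zero
  have hcompne : ∀ P : Polynomial ℂ, P ≠ 0 → P.comp (Polynomial.C α * Polynomial.X) ≠ 0 := by
    intro P hP hcontra
    apply hP
    ext m
    have h0 := congrArg (fun r => Polynomial.coeff r m) hcontra
    simp only [coeff_comp_C_mul_X', coeff_zero] at h0
    simpa [pow_ne_zero m hα0] using h0
  have hfeq : (RatFunc.C α * RatFunc.X : RatFunc ℂ)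
      = algebraMap (Polynomial ℂ) _ (Polynomial.C α * Polynomial.X) := by
    rw [map_mul, RatFunc.algebraMap_C, RatFunc.algebraMap_X]
  have hcompq : ParallelTensor.comp q (RatFunc.C α * RatFunc.X)
      = algebraMap (Polynomial ℂ) (RatFunc ℂ) (q.num.comp (Polynomial.C α * Polynomial.X))
        / algebraMap (Polynomial ℂ) (RatFunc ℂ) (q.denom.comp (Polynomial.C α * Polynomial.X)) := by
    rw [ParallelTensor.comp, hfeq, aeval_algebraMap_apply, aeval_algebraMap_apply,
      ← Polynomial.comp_eq_aeval, ← Polynomial.comp_eq_aeval]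
  have heq' : algebraMap (Polynomial ℂ) (RatFunc ℂ) (q.num.comp (Polynomial.C α * Polynomial.X))
        / algebraMap (Polynomial ℂ) (RatFunc ℂ) (q.denom.comp (Polynomial.C α * Polynomial.X))
        * RatFunc.C (α ^ k)
      = RatFunc.C lam
        * (algebraMap (Polynomial ℂ) (RatFunc ℂ) q.num
            / algebraMap (Polynomial ℂ) (RatFunc ℂ) q.denom) := by
    rw [← hcompq, RatFunc.num_div_denom]; exact heq
  have hb := RatFunc.algebraMap_ne_zero (hcompne _ hD0)
  have hd := RatFunc.algebraMap_ne_zero hD0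
  have key : q.num.comp (Polynomial.C α * Polynomial.X) * Polynomial.C (α ^ k) * q.denom
      = Polynomial.C lam * q.num * (q.denom.comp (Polynomial.C α * Polynomial.X)) := by
    apply RatFunc.algebraMap_injective ℂ
    simp only [map_mul, map_pow, RatFunc.algebraMap_C]
    field_simp at heq'
    have hqnd : algebraMap (Polynomial ℂ) (RatFunc ℂ) q.num
        = q * algebraMap (Polynomial ℂ) (RatFunc ℂ) q.denom := by
      exact (div_eq_iff hd).mp q.num_div_denom
    rw [map_pow] at heq'
    linear_combination heq'
  have hcop : IsCoprime q.num q.denom := q.isCoprime_num_denom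
  have hcop' : IsCoprime (q.num.comp (Polynomial.C α * Polynomial.X))
      (q.denom.comp (Polynomial.C α * Polynomial.X)) := by
    have h2 := hcop.map (Polynomial.aeval (Polynomial.C α * Polynomial.X) : Polynomial ℂ →ₐ[ℂ] Polynomial ℂ).toRingHom
    simpa only [AlgHom.toRingHom_eq_coe, RingHom.coe_coe, ← Polynomial.comp_eq_aeval] using h2
  have hd1 : q.num.comp (Polynomial.C α * Polynomial.X) ∣ q.num := by
    have h1 : q.num.comp (Polynomial.C α * Polynomial.X)
        ∣ (Polynomial.C lam * q.num) * (q.denom.comp (Polynomial.C α * Polynomial.X)) :=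
      ⟨Polynomial.C (α ^ k) * q.denom, by rw [← key]; ring⟩
    have h2 := hcop'.dvd_of_dvd_mul_right h1
    refine h2.trans ⟨Polynomial.C lam⁻¹, ?_⟩
    rw [mul_right_comm, ← Polynomial.C_mul, mul_inv_cancel₀ hlam, Polynomial.C_1, one_mul]
  have hd2 : q.num ∣ q.num.comp (Polynomial.C α * Polynomial.X) := by
    have h1 : q.num
        ∣ (q.num.comp (Polynomial.C α * Polynomial.X) * Polynomial.C (α ^ k)) * q.denom :=
      ⟨Polynomial.C lam * (q.denom.comp (Polynomial.C α * Polynomial.X)), by rw [key]; ring⟩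
    have h2 := hcop.dvd_of_dvd_mul_right h1
    refine h2.trans ⟨Polynomial.C (α ^ k)⁻¹, ?_⟩
    rw [mul_assoc, ← Polynomial.C_mul, mul_inv_cancel₀ (pow_ne_zero k hα0),
      Polynomial.C_1, mul_one]
  obtain ⟨u, hu⟩ := associated_of_dvd_dvd hd2 hd1
  obtain ⟨c, hcu, hcC⟩ := Polynomial.isUnit_iff.mp u.isUnit
  have hc0 : c ≠ 0 := hcu.ne_zero
  have hNc : q.num.comp (Polynomial.C α * Polynomial.X) = Polynomial.C c * q.num := by
    rw [← hu, ← hcC]; ring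
  have h3 : Polynomial.C (c * α ^ k) * q.denom
      = Polynomial.C lam * (q.denom.comp (Polynomial.C α * Polynomial.X)) := by
    have h4 : q.num * (Polynomial.C (c * α ^ k) * q.denom)
        = q.num * (Polynomial.C lam * (q.denom.comp (Polynomial.C α * Polynomial.X))) := by
      have h5 := key
      rw [hNc] at h5
      rw [Polynomial.C_mul]
      linear_combination h5
    exact mul_left_cancel₀ hN0 h4
  have hClam : (Polynomial.C lam : Polynomial ℂ) ≠ 0 := by simpa using hlam
  have hDc : q.denom.comp (Polynomial.C α * Polynomial.X)
      = Polynomial.C (c * α ^ k / lam) * q.denom := by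
    apply mul_left_cancel₀ hClam
    rw [← h3, ← mul_assoc, ← Polynomial.C_mul]
    congr 2
    field_simp
  obtain ⟨r₁, hr₁n, hcr₁, p₁, hp₁0, hNeq⟩ := eigen_decomp' hn0 hα hN0 hNc
  obtain ⟨r₂, hr₂n, hcr₂, p₂, hp₂0, hDeq⟩ := eigen_decomp' hn0 hα hD0 hDc
  have hlame : lam * α ^ r₂ = α ^ r₁ * α ^ k := by
    have h5 := hcr₂
    rw [hcr₁] at h5
    field_simp at h5
    linear_combination -h5
  set e : ℤ := (r₁ : ℤ) + k - r₂ with hedef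
  set j : ℕ := (e % n).toNat with hjdef
  have hn0' : (0:ℤ) < n := by exact_mod_cast hn0
  have hj_eq : (j : ℤ) = e % n := Int.toNat_of_nonneg (Int.emod_nonneg e hn0'.ne')
  have hjn : j < n := by
    have h6 := Int.emod_lt_of_pos e hn0'
    omega
  set t : ℤ := e / n with htdef
  have hdm := Int.mul_ediv_add_emod e n
  have hnt : (n:ℤ) * t = e - j := by
    rw [htdef]
    linarith [hj_eq, hdm]
  have hzn : α ^ (n:ℤ) = 1 := by rw [zpow_natCast, hα.pow_eq_one]
  have hlamj : lam = α ^ j := by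
    have h6 : lam = α ^ e := by
      rw [hedef, zpow_sub₀ hα0, zpow_add₀ hα0, zpow_natCast, zpow_natCast, zpow_natCast,
        eq_div_iff (pow_ne_zero _ hα0)]
      exact hlame
    have h7 : e = (n:ℤ) * t + j := by linarith [hnt]
    rw [h6, h7, zpow_add₀ hα0, zpow_mul, hzn, one_zpow, one_mul, zpow_natCast]
  -- the lifted substitution homomorphism
  set φ : Polynomial ℂ →ₐ[ℂ] RatFunc ℂ := Polynomial.aeval (RatFunc.X ^ n) with hφdef
  have hφeq : ∀ P : Polynomial ℂ, φ P = algebraMap _ _ (Polynomial.expand ℂ n P) := by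
    intro P
    rw [hφdef, ← RatFunc.algebraMap_X, ← map_pow, aeval_algebraMap_apply]
    exact congrArg _ (by simp [Polynomial.expand, Polynomial.aeval_def]; rfl)
  have hφinj : Function.Injective φ := by
    intro a b hab
    rw [hφeq, hφeq] at hab
    exact Polynomial.expand_injective hn0 (RatFunc.algebraMap_injective ℂ hab)
  set Φ := RatFunc.liftAlgHom φ
      (nonZeroDivisors_le_comap_nonZeroDivisors_of_injective _ hφinj) with hΦdef
  have hΦdiv : ∀ a b : Polynomial ℂ,
      Φ (algebraMap _ _ a / algebraMap _ _ b) = φ a / φ b := fun a b =>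
    RatFunc.liftAlgHom_apply_div _ _ _ _
  have hΦa : ∀ a : Polynomial ℂ, Φ (algebraMap _ _ a) = φ a := by
    intro a
    have h8 := hΦdiv a 1
    simpa using h8
  have hcompg : ∀ gg : RatFunc ℂ, ParallelTensor.comp gg (RatFunc.X ^ n) = Φ gg := by
    intro gg
    rw [ParallelTensor.comp]
    rw [show Polynomial.aeval (RatFunc.X ^ n) gg.num = φ gg.num from rfl,
      show Polynomial.aeval (RatFunc.X ^ n) gg.denom = φ gg.denom from rfl,
      ← hΦdiv, RatFunc.num_div_denom]
  have hX0 : (RatFunc.X : RatFunc ℂ) ≠ 0 := RatFunc.X_ne_zero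
  set g : RatFunc ℂ := (algebraMap (Polynomial ℂ) (RatFunc ℂ) p₁
      / algebraMap (Polynomial ℂ) (RatFunc ℂ) p₂) * RatFunc.X ^ t with hgdef
  refine ⟨j, hjn, hlamj, g, ?_⟩
  rw [hcompg g, hgdef, map_mul, map_div₀, hΦa, hΦa, hφeq, hφeq, map_zpow₀]
  have hΦX : Φ RatFunc.X = RatFunc.X ^ n := by
    rw [← RatFunc.algebraMap_X, hΦa, hφeq, Polynomial.expand_X, map_pow, RatFunc.algebraMap_X]
  rw [hΦX]
  conv_lhs => rw [← q.num_div_denom]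
  rw [hNeq, hDeq, map_mul, map_mul, map_pow, map_pow, RatFunc.algebraMap_X]
  have hE₂ : algebraMap (Polynomial ℂ) (RatFunc ℂ) (Polynomial.expand ℂ n p₂) ≠ 0 :=
    RatFunc.algebraMap_ne_zero (fun h => hp₂0 (Polynomial.expand_injective hn0 (by simpa using h)))
  have hexp : (r₁:ℤ) - (r₂:ℤ) = (n:ℤ)*t + ((j:ℤ) - k) := by
    rw [hedef] at hnt
    linarith [hnt]
  calc algebraMap (Polynomial ℂ) (RatFunc ℂ) (Polynomial.expand ℂ n p₁) * RatFunc.X ^ r₁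
        / (algebraMap (Polynomial ℂ) (RatFunc ℂ) (Polynomial.expand ℂ n p₂) * RatFunc.X ^ r₂)
      = algebraMap (Polynomial ℂ) (RatFunc ℂ) (Polynomial.expand ℂ n p₁)
          / algebraMap (Polynomial ℂ) (RatFunc ℂ) (Polynomial.expand ℂ n p₂)
          * (RatFunc.X ^ (r₁:ℤ) / RatFunc.X ^ (r₂:ℤ)) := by
        rw [zpow_natCast, zpow_natCast, div_mul_div_comm]
    _ = algebraMap (Polynomial ℂ) (RatFunc ℂ) (Polynomial.expand ℂ n p₁)
          / algebraMap (Polynomial ℂ) (RatFunc ℂ) (Polynomial.expand ℂ n p₂)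
          * RatFunc.X ^ ((r₁:ℤ) - (r₂:ℤ)) := by rw [zpow_sub₀ hX0]
    _ = algebraMap (Polynomial ℂ) (RatFunc ℂ) (Polynomial.expand ℂ n p₁)
          / algebraMap (Polynomial ℂ) (RatFunc ℂ) (Polynomial.expand ℂ n p₂)
          * ((RatFunc.X ^ n) ^ t * RatFunc.X ^ ((j:ℤ) - (k:ℤ))) := by
        rw [hexp, zpow_add₀ hX0, ← zpow_natCast (RatFunc.X : RatFunc ℂ) n, ← zpow_mul]
    _ = algebraMap (Polynomial ℂ) (RatFunc ℂ) (Polynomial.expand ℂ n p₁)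
          / algebraMap (Polynomial ℂ) (RatFunc ℂ) (Polynomial.expand ℂ n p₂)
          * (RatFunc.X ^ n) ^ t * RatFunc.X ^ ((j:ℤ) - (k:ℤ)) := by ring


end
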